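/- Let 0 < ε < 1, ρ > 0, ρ* = (1 + ε/2)ρ, μ ≤ ερ/6, and let d° satisfy (1−ε/6)d ≤ d° ≤ (1+ε/6)d. For curves P, Q in a metric space, if D_F(P, Q) ≤ ρ then the perceived discrete Fréchet distance D_F°(P^μ, Q) ≤ ρ*. -/

import Mathlib

open scoped BigOperators

namespace Frechet

variable {X : Type*}

/-- A single step of a monotone discrete walk: each coordinate increases by 0 or 1,
and not both stay the same. -/
def IsStep (a b : ℕ × ℕ) : Prop :=
  (b.1 = a.1 ∨ b.1 = a.1 + 1) ∧ (b.2 = a.2 ∨ b.2 = a.2 + 1) ∧ b ≠ a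

/-- A monotone discrete walk from (0,0) to (n-1, m-1) in the n × m lattice
(0-indexed version of a walk from (1,1) to (n,m)). -/
def IsWalk (n m : ℕ) (F : List (ℕ × ℕ)) : Prop :=
  F ≠ [] ∧ F.head? = some (0, 0) ∧ F.getLast? = some (n - 1, m - 1) ∧
    F.Chain' IsStep ∧ ∀ p ∈ F, p.1 < n ∧ p.2 < m

/-- Cost of a walk: the maximum matched distance along it. -/
def walkCost (d : X → X → ℝ) (P Q : ℕ → X) (F : List (ℕ × ℕ)) : ℝ :=
  (F.map fun p => d (P p.1) (Q p.2)).foldr max 0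

/-- Discrete Fréchet distance between `P` (first `n` points) and `Q` (first `m` points),
computed with respect to the distance-like function `d`. -/
noncomputable def dF (d : X → X → ℝ) (P : ℕ → X) (n : ℕ) (Q : ℕ → X) (m : ℕ) : ℝ :=
  sInf {c | ∃ F, IsWalk n m F ∧ walkCost d P Q F = c}

/-- Arc length of the polygonal curve `P` between vertex indices `i` and `j`. -/
def arcLen (d : X → X → ℝ) (P : ℕ → X) (i j : ℕ) : ℝ :=
  ∑ k ∈ Finset.Ico i j, d (P k) (P (k + 1))

/-- `S` is the list of indices of the greedy `μ`-simplification of the curve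
`P` with `n` vertices: it starts at vertex `0`, after a vertex `a` the next chosen
vertex `b` is the first one with arc length `> μ` (unless `b` is the final vertex
`n-1`, which is always appended), and it ends at vertex `n-1`. -/
def IsSimplification (d : X → X → ℝ) (P : ℕ → X) (n : ℕ) (μ : ℝ) (S : List ℕ) : Prop :=
  S.head? = some 0 ∧ S.getLast? = some (n - 1) ∧ S.Pairwise (· < ·) ∧
    (∀ a ∈ S, a < n) ∧
    S.Chain' (fun a b =>
      (∀ j, a < j → j < b → arcLen d P a j ≤ μ) ∧ (b = n - 1 ∨ μ < arcLen d P a b))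

/-- The subsequence of `P` selected by the index list `S`, as a curve. -/
def subCurve (P : ℕ → X) (S : List ℕ) : ℕ → X :=
  fun t => P (S.getD t 0)

/-- Discrete c-packedness of the polygonal curve `P` (first `n` vertices): for every
ball, the total length of the edges of `P` contained in the ball is at most `c`
times the radius. -/
def CPacked (d : X → X → ℝ) (P : ℕ → X) (n : ℕ) (c : ℝ) : Prop :=
  ∀ (x : X) (r : ℝ), 0 ≤ r →
    ∑ k ∈ Finset.range (n - 1),
      (if d (P k) x ≤ r ∧ d (P (k + 1)) x ≤ r then d (P k) (P (k + 1)) else 0) ≤ c * r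

/-- Directed discrete Hausdorff distance from `P` (first `n` points) to `Q`
(first `m` points). -/
noncomputable def dirHaus (d : X → X → ℝ) (P : ℕ → X) (n : ℕ) (Q : ℕ → X) (m : ℕ) : ℝ :=
  sSup {r | ∃ i < n, r = sInf {s | ∃ j < m, s = d (P i) (Q j)}}

/-- Discrete (symmetric) Hausdorff distance. -/
noncomputable def dHaus (d : X → X → ℝ) (P : ℕ → X) (n : ℕ) (Q : ℕ → X) (m : ℕ) : ℝ :=
  max (dirHaus d P n Q m) (dirHaus d Q m P n)

/-! ### Auxiliary lemmas for `decision_no` -/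

lemma foldr_max_nonneg (l : List ℝ) : 0 ≤ l.foldr max 0 := by
  induction l with
  | nil => simp
  | cons a l ih => exact le_trans ih (le_max_right _ _)

lemma le_foldr_max {l : List ℝ} {x : ℝ} (hx : x ∈ l) : x ≤ l.foldr max 0 := by
  induction l with
  | nil => simp at hx
  | cons a l ih =>
    rcases List.mem_cons.1 hx with h | h
    · subst h; exact le_max_left _ _
    · exact le_trans (ih h) (le_max_right _ _)

lemma foldr_max_le {l : List ℝ} {B : ℝ} (hB : 0 ≤ B) (h : ∀ x ∈ l, x ≤ B) :
    l.foldr max 0 ≤ B := by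
  induction l with
  | nil => simpa
  | cons a l ih =>
    exact max_le (h a (by simp)) (ih fun x hx => h x (List.mem_cons_of_mem _ hx))

/-- Remove adjacent duplicates from a list. -/
def compress : List (ℕ × ℕ) → List (ℕ × ℕ)
  | [] => []
  | [a] => [a]
  | a :: b :: l => if a = b then compress (b :: l) else a :: compress (b :: l)

lemma compress_ne_nil : ∀ {l : List (ℕ × ℕ)}, l ≠ [] → compress l ≠ []
  | [], h => absurd rfl h
  | [a], _ => by simp [compress]
  | a :: b :: l, _ => by
    simp only [compress]
    split
    · exact compress_ne_nil (by simp)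
    · simp

lemma head?_compress : ∀ (l : List (ℕ × ℕ)), (compress l).head? = l.head?
  | [] => rfl
  | [a] => rfl
  | a :: b :: l => by
    simp only [compress]
    split
    · next h => rw [head?_compress (b :: l)]; simp [h]
    · simp

lemma getLast?_cons_ne {α : Type*} {l : List α} (h : l ≠ []) (x : α) :
    (x :: l).getLast? = l.getLast? := by
  cases l with
  | nil => exact absurd rfl h
  | cons b t => exact List.getLast?_cons_cons ..

lemma getLast?_compress : ∀ (l : List (ℕ × ℕ)), (compress l).getLast? = l.getLast?
  | [] => rfl
  | [a] => rfl
  | a :: b :: l => by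
    simp only [compress]
    split
    · rw [getLast?_compress (b :: l), List.getLast?_cons_cons]
    · rw [getLast?_cons_ne (compress_ne_nil (by simp)) a, getLast?_compress (b :: l),
        List.getLast?_cons_cons]

lemma mem_compress : ∀ {l : List (ℕ × ℕ)} {x : ℕ × ℕ}, x ∈ compress l → x ∈ l
  | [], x => by simp [compress]
  | [a], x => by simp [compress]
  | a :: b :: l, x => by
    simp only [compress]
    split
    · intro hx; exact List.mem_cons_of_mem _ (mem_compress hx)
    · intro hx
      rcases List.mem_cons.1 hx with h | h
      · simp [h]
      · exact List.mem_cons_of_mem _ (mem_compress h)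

lemma chain'_compress {R : ℕ × ℕ → ℕ × ℕ → Prop} :
    ∀ {l : List (ℕ × ℕ)}, l.Chain' R →
      (compress l).Chain' (fun a b => R a b ∧ a ≠ b)
  | [], _ => by simp [compress, List.Chain']
  | [a], _ => by simp [compress, List.Chain']
  | a :: b :: l, h => by
    have htail : (b :: l).Chain' R := h.tail
    have hab : R a b := (List.isChain_cons_cons.1 h).1
    simp only [compress]
    split
    · exact chain'_compress htail
    · next hne =>
      refine List.isChain_cons.2 ⟨?_, chain'_compress htail⟩
      intro y hy
      have hy' : y = b := by
        rw [head?_compress (b :: l)] at hy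
        simpa using hy.symm
      subst hy'
      exact ⟨hab, hne⟩

/-- A canonical staircase walk, used to show walks exist. -/
def sampleWalk (n m : ℕ) : List (ℕ × ℕ) :=
  (List.range (max n m)).map fun i => (min i (n - 1), min i (m - 1))

lemma sampleWalk_isWalk {n m : ℕ} (hn : 0 < n) (hm : 0 < m) :
    IsWalk n m (sampleWalk n m) := by
  have hmax : 0 < max n m := lt_max_of_lt_left hn
  refine ⟨?_, ?_, ?_, ?_, ?_⟩
  · simp only [sampleWalk, ne_eq, List.map_eq_nil_iff, List.range_eq_nil]
    omega
  · rw [List.head?_eq_getElem?, sampleWalk]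
    rw [List.getElem?_map, List.getElem?_range hmax]
    simp
  · rw [List.getLast?_eq_getElem?, sampleWalk]
    have hlen : ((List.range (max n m)).map
        fun i => ((min i (n - 1), min i (m - 1)) : ℕ × ℕ)).length = max n m := by simp
    rw [hlen, List.getElem?_map, List.getElem?_range (by omega)]
    simp only [Option.map_some, Option.some.injEq, Prod.mk.injEq]
    omega
  · simp only [sampleWalk, List.Chain', List.isChain_map]
    obtain ⟨k, hk⟩ : ∃ k, max n m = k + 1 := ⟨max n m - 1, by omega⟩
    rw [hk, List.isChain_range_succ]
    intro i hi
    refine ⟨?_, ?_, ?_⟩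
    · omega
    · omega
    · simp only [ne_eq, Prod.mk.injEq, not_and]
      omega
  · intro p hp
    rw [sampleWalk, List.mem_map] at hp
    obtain ⟨i, _, rfl⟩ := hp
    constructor <;> simp <;> omega

lemma dist_le_arcLen {X : Type*} [MetricSpace X] (P : ℕ → X) :
    ∀ {a b : ℕ}, a ≤ b → dist (P a) (P b) ≤ arcLen dist P a b := by
  intro a b
  induction b with
  | zero =>
    intro hab
    have : a = 0 := Nat.le_zero.1 hab
    subst this
    simp [arcLen]
  | succ b ih =>
    intro hab
    rcases Nat.eq_or_lt_of_le hab with h | h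
    · subst h
      simp [arcLen]
    · have hab' : a ≤ b := Nat.lt_succ_iff.mp h
      have hsum : arcLen dist P a (b + 1)
          = arcLen dist P a b + dist (P b) (P (b + 1)) := by
        simp only [arcLen]
        exact Finset.sum_Ico_succ_top hab' _
      rw [hsum]
      calc dist (P a) (P (b + 1)) ≤ dist (P a) (P b) + dist (P b) (P (b + 1)) :=
            dist_triangle _ _ _
        _ ≤ arcLen dist P a b + dist (P b) (P (b + 1)) := by
            have := ih hab'; linarith

/-- if `D_F(P, Q) ≤ ρ` then the perceived discrete Fréchet distance
between the `μ`-simplification `P^μ` and `Q` is at most `ρ* = (1+ε/2)ρ`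
(with `μ ≤ ερ/6` and a `(1 ± ε/6)`-perceived distance `d'`). -/
theorem decision_no {X : Type*} [MetricSpace X] (d' : X → X → ℝ)
    (ε ρ ρstar μ : ℝ) (hε0 : 0 < ε) (hε1 : ε < 1) (hρ : 0 < ρ)
    (hρstar : ρstar = (1 + ε / 2) * ρ) (hμ0 : 0 ≤ μ) (hμ : μ ≤ ε * ρ / 6)
    (hd : ∀ x y, (1 - ε / 6) * dist x y ≤ d' x y ∧ d' x y ≤ (1 + ε / 6) * dist x y)
    (P : ℕ → X) (n : ℕ) (hn : 0 < n)
    (Q : ℕ → X) (m : ℕ) (hm : 0 < m)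
    (S : List ℕ) (hS : IsSimplification dist P n μ S)
    (h : dF dist P n Q m ≤ ρ) :
    dF d' (subCurve P S) S.length Q m ≤ ρstar := by
  obtain ⟨hhead, hlast, hsort, hbound, hchain⟩ := hS
  have hSne : S ≠ [] := by
    intro h0; rw [h0] at hhead; simp at hhead
  set L := S.length with hL
  have hSlen : 0 < L := List.length_pos_iff.2 hSne
  have hgetD0 : S.getD 0 0 = 0 := by
    rw [List.getD_eq_getElem S 0 hSlen, ← List.head_eq_getElem hSne]
    rw [List.head?_eq_head hSne] at hhead
    exact Option.some.inj hhead
  have hgetDlast : S.getD (L - 1) 0 = n - 1 := by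
    rw [List.getD_eq_getElem S 0 (by omega), ← List.getLast_eq_getElem hSne]
    rw [List.getLast?_eq_getLast hSne] at hlast
    exact Option.some.inj hlast
  have hmono : ∀ a b : ℕ, a < b → b < L → S.getD a 0 < S.getD b 0 := by
    intro a b hab hbL
    rw [List.getD_eq_getElem S 0 (by omega), List.getD_eq_getElem S 0 hbL]
    exact List.pairwise_iff_getElem.1 hsort a b (by omega) hbL hab
  -- the simplification-predecessor index
  set φ : ℕ → ℕ := fun i => Nat.findGreatest (fun a => S.getD a 0 ≤ i) (L - 1) with hφ
  have hφdef : ∀ i, φ i = Nat.findGreatest (fun a => S.getD a 0 ≤ i) (L - 1) :=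
    fun _ => rfl
  have hφle : ∀ i, φ i < L := by
    intro i
    have := Nat.findGreatest_le (P := fun a => S.getD a 0 ≤ i) (L - 1)
    rw [hφdef]; omega
  have hφspec : ∀ i, S.getD (φ i) 0 ≤ i := by
    intro i
    rw [hφdef]
    exact Nat.findGreatest_spec (P := fun a => S.getD a 0 ≤ i) (Nat.zero_le _)
      (by show S.getD 0 0 ≤ i; rw [hgetD0]; exact Nat.zero_le i)
  have hφge : ∀ i a : ℕ, a < L → S.getD a 0 ≤ i → a ≤ φ i := by
    intro i a haL hai
    by_contra hlt
    push_neg at hlt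
    rw [hφdef] at hlt
    exact Nat.findGreatest_is_greatest hlt (by omega) hai
  have hφ0 : φ 0 = 0 := by
    rcases Nat.eq_zero_or_pos (φ 0) with h0 | h0
    · exact h0
    · exfalso
      have h1 := hmono 0 (φ 0) h0 (hφle 0)
      have h2 := hφspec 0
      omega
  have hφlast : φ (n - 1) = L - 1 := by
    have h1 := hφge (n - 1) (L - 1) (by omega) hgetDlast.le
    have h2 := hφle (n - 1)
    omega
  have hφstep : ∀ i, φ (i + 1) = φ i ∨ φ (i + 1) = φ i + 1 := by
    intro i
    have h1 : φ i ≤ φ (i + 1) :=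
      hφge (i + 1) (φ i) (hφle i) (le_trans (hφspec i) (by omega))
    by_contra hcon
    push_neg at hcon
    have h3 : S.getD (φ i + 1) 0 < S.getD (φ (i + 1)) 0 :=
      hmono _ _ (by omega) (hφle _)
    have h4 := hφspec (i + 1)
    have h6 := hφle (i + 1)
    have h5 := hφge i (φ i + 1) (by omega) (by omega)
    omega
  have hgg : ∀ (a : ℕ) (ha : a < L), S.get ⟨a, ha⟩ = S.getD a 0 := by
    intro a ha
    rw [List.get_eq_getElem, List.getD_eq_getElem S 0 ha]
  -- every vertex is within μ of its simplification predecessor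
  have hpred : ∀ i, i < n → dist (P (S.getD (φ i) 0)) (P i) ≤ μ := by
    intro i hi
    have haL := hφle i
    have h1 : S.getD (φ i) 0 ≤ i := hφspec i
    rcases Nat.eq_or_lt_of_le h1 with he | hlt
    · rw [he]
      simpa [dist_self] using hμ0
    · have haneq : φ i < L - 1 := by
        rcases Nat.lt_or_ge (φ i) (L - 1) with h | h
        · exact h
        · exfalso
          have : φ i = L - 1 := by omega
          rw [this, hgetDlast] at hlt
          omega
      have hcc := List.isChain_iff_getElem.1 hchain (φ i) (by omega)
      rw [← List.getD_eq_getElem S 0, ← List.getD_eq_getElem S 0] at hcc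
      obtain ⟨hA, _⟩ := hcc
      have hnext : i < S.getD (φ i + 1) 0 := by
        by_contra hc
        push_neg at hc
        have := hφge i (φ i + 1) (by omega) hc
        omega
      exact le_trans (dist_le_arcLen P h1) (hA i hlt hnext)
  -- extract a near-optimal walk for (P, Q)
  have hTne : Set.Nonempty {c | ∃ F, IsWalk n m F ∧ walkCost dist P Q F = c} :=
    ⟨_, sampleWalk n m, sampleWalk_isWalk hn hm, rfl⟩
  rw [dF] at h
  have hδ : (0 : ℝ) < ρ * ε / 18 := by positivity
  have hlt' : sInf {c | ∃ F, IsWalk n m F ∧ walkCost dist P Q F = c}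
      < ρ + ρ * ε / 18 := lt_of_le_of_lt h (by linarith)
  obtain ⟨c, hcmem, hclt⟩ := exists_lt_of_csInf_lt hTne hlt'
  obtain ⟨F, hF, hFc⟩ := hcmem
  obtain ⟨hFne, hFhead, hFlast, hFchain, hFmem⟩ := hF
  set G := F.map (fun p => (φ p.1, p.2)) with hG
  set G' := compress G with hG'
  -- cost bound for the transformed walk
  have hcost : ∀ p ∈ G', d' (subCurve P S p.1) (Q p.2) ≤ ρstar := by
    intro p hp
    have hpG := mem_compress hp
    rw [hG, List.mem_map] at hpG
    obtain ⟨q, hqF, hq⟩ := hpG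
    obtain ⟨hq1, hq2⟩ := hFmem q hqF
    have h1 : dist (P q.1) (Q q.2) ≤ c := by
      rw [← hFc, walkCost]
      exact le_foldr_max (List.mem_map_of_mem hqF)
    have h2 := hpred q.1 hq1
    have h3 : dist (P (S.getD (φ q.1) 0)) (Q q.2) ≤ μ + c :=
      le_trans (dist_triangle _ (P q.1) _) (by linarith)
    have h4 := (hd (P (S.getD (φ q.1) 0)) (Q q.2)).2
    have h5 : (0 : ℝ) ≤ 1 + ε / 6 := by linarith
    rw [← hq]
    simp only [subCurve]
    calc d' (P (S.getD (φ q.1) 0)) (Q q.2)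
        ≤ (1 + ε / 6) * dist (P (S.getD (φ q.1) 0)) (Q q.2) := h4
      _ ≤ (1 + ε / 6) * (μ + c) := mul_le_mul_of_nonneg_left h3 h5
      _ ≤ ρstar := by
          rw [hρstar]
          nlinarith [hclt.le, hμ, mul_le_mul_of_nonneg_left hμ hε0.le,
            mul_le_mul_of_nonneg_left hclt.le hε0.le, mul_pos hε0 hρ]
  have hGne : G ≠ [] := by
    rw [hG]
    simp [hFne]
  have hwalk : IsWalk L m G' := by
    refine ⟨compress_ne_nil hGne, ?_, ?_, ?_, ?_⟩
    · rw [hG', head?_compress, hG, List.head?_map, hFhead]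
      simp [hφ0]
    · rw [hG', getLast?_compress, hG, List.getLast?_map, hFlast]
      simp [hφlast]
    · have hGchain : G.Chain'
          (fun a b => (b.1 = a.1 ∨ b.1 = a.1 + 1) ∧ (b.2 = a.2 ∨ b.2 = a.2 + 1)) := by
        simp only [hG, List.Chain', List.isChain_map]
        refine hFchain.imp ?_
        intro a b hab
        obtain ⟨h1, h2, _⟩ := hab
        refine ⟨?_, h2⟩
        rcases h1 with hx | hx
        · left; rw [hx]
        · rw [hx]; exact hφstep a.1
      refine (chain'_compress hGchain).imp ?_
      intro a b hab
      exact ⟨hab.1.1, hab.1.2, Ne.symm hab.2⟩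
    · intro p hp
      have hpG := mem_compress hp
      rw [hG, List.mem_map] at hpG
      obtain ⟨q, hqF, hq⟩ := hpG
      rw [← hq]
      exact ⟨hφle q.1, (hFmem q hqF).2⟩
  -- conclude
  have hbdd : BddBelow {c | ∃ F, IsWalk L m F ∧ walkCost d' (subCurve P S) Q F = c} := by
    refine ⟨0, ?_⟩
    rintro x ⟨F0, _, rfl⟩
    exact foldr_max_nonneg _
  have hmem : walkCost d' (subCurve P S) Q G'
      ∈ {c | ∃ F, IsWalk L m F ∧ walkCost d' (subCurve P S) Q F = c} :=
    ⟨G', hwalk, rfl⟩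
  have hle : walkCost d' (subCurve P S) Q G' ≤ ρstar := by
    rw [walkCost]
    refine foldr_max_le (by nlinarith) ?_
    intro x hx
    rw [List.mem_map] at hx
    obtain ⟨p, hp, rfl⟩ := hx
    exact hcost p hp
  rw [dF]
  exact le_trans (csInf_le hbdd hmem) hle


end Frechet
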